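/- arXiv:1409.0338 — 2 statements merged into one kernel-verified Lean document; each statement's English description precedes it below -/
import Mathlib

section
/- Let a = (a_1,...,a_n), b = (b_1,...,b_m), c = (c_1,...,c_{m+n}) be partitions (weakly decreasing sequences of nonnegative integers). Define h_q := min{ i : b_{i-q+1} < c_i } for q = 1,...,n (with the conventions b_i = +∞ for i ≤ 0, b_i = -∞ for i > m, c_i = -∞ for i > m+n), and define x_1 := Σ_{i=1}^{h_1} c_i − Σ_{i=1}^{h_1−1} b_i and x_q := Σ_{i=1}^{h_q} c_i − Σ_{i=1}^{h_q−q} b_i − x_1 − ... − x_{q−1}. Suppose b_i ≥ c_{i+n} for i = 1,...,m and Σ b_i + Σ a_i = Σ c_i. Then the generalized majorization c ≺ (b,a) holds if and only if x ≼ a in the dominance ordering (i.e., Σ_{i=1}^{k} x_i ≤ Σ_{i=1}^{k} a_i for all k, with equality for k = n). -/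
/-- `a` is a partition with (at most) `n` parts `a 1 ≥ a 2 ≥ ... ≥ a n ≥ 0`
(values of `a` outside `{1, ..., n}` are irrelevant). -/
def IsPartOn (a : ℕ → ℤ) (n : ℕ) : Prop :=
  (∀ i, 1 ≤ i → i ≤ n → 0 ≤ a i) ∧ ∀ i, 1 ≤ i → i + 1 ≤ n → a (i + 1) ≤ a i

/-- The extension of a partition `b = (b 1, ..., b m)` by `+∞` for indices `≤ 0`
and by `-∞` for indices `> m`. -/
noncomputable def extSeq (b : ℕ → ℤ) (m : ℕ) : ℤ → EReal := fun i =>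
  if i ≤ 0 then ⊤ else if i ≤ (m : ℤ) then (((b i.toNat : ℤ) : ℝ) : EReal) else ⊥

/-- `hIdx b c m n q` is `h_q = min { i | b (i - q + 1) < c i }`, with the conventions
`b i = +∞` for `i ≤ 0`, `b i = -∞` for `i > m`, `c i = -∞` for `i > m + n`. -/
noncomputable def hIdx (b c : ℕ → ℤ) (m n q : ℕ) : ℕ :=
  sInf { i : ℕ | extSeq b m ((i : ℤ) - q + 1) < extSeq c (m + n) i }

/-- `csum a t = a 1 + a 2 + ... + a t`. -/
def csum (a : ℕ → ℤ) (t : ℕ) : ℤ := ∑ i ∈ Finset.Icc 1 t, a i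

/-- `Ssum b c m n q = Σ_{i=1}^{h_q} c i - Σ_{i=1}^{h_q - q} b i` (and `0` for `q = 0`),
so that `x 1 + ... + x q = Ssum b c m n q`. -/
noncomputable def Ssum (b c : ℕ → ℤ) (m n q : ℕ) : ℤ :=
  if q = 0 then 0 else csum c (hIdx b c m n q) - csum b (hIdx b c m n q - q)

/-- The sequence `x` defined by `x 1 = Σ_{i=1}^{h_1} c i - Σ_{i=1}^{h_1 - 1} b i` and
`x q = Σ_{i=1}^{h_q} c i - Σ_{i=1}^{h_q - q} b i - x 1 - ... - x (q-1)`. -/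
noncomputable def xSeq (b c : ℕ → ℤ) (m n q : ℕ) : ℤ :=
  Ssum b c m n q - Ssum b c m n (q - 1)

/-- Dominance ordering `x ≼ a` for sequences of length `n` (equal sums and all
partial-sum inequalities). -/
def DomOn (x a : ℕ → ℤ) (n : ℕ) : Prop :=
  (∀ j, 1 ≤ j → j ≤ n → csum x j ≤ csum a j) ∧ csum x n = csum a n

/-- Generalized majorization `c ≺ (b, a)`, where `a` has `n` parts, `b` has `m` parts
and `c` has `m + n` parts. -/
noncomputable def GenMaj (c b a : ℕ → ℤ) (m n : ℕ) : Prop :=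
  (∀ i, 1 ≤ i → i ≤ m → c (i + n) ≤ b i) ∧
  csum b m + csum a n = csum c (m + n) ∧
  ∀ q, 1 ≤ q → q ≤ n →
    csum c (hIdx b c m n q) - csum b (hIdx b c m n q - q) ≤ csum a q

/-- Elementary generalized majorization `d ≺₁ (e, a1)`, where `e` has `m` parts and
`d` has `m + 1` parts. -/
noncomputable def ElemGenMaj (d e : ℕ → ℤ) (a1 : ℤ) (m : ℕ) : Prop :=
  (∀ i, 1 ≤ i → i ≤ m → d (i + 1) ≤ e i) ∧
  csum e m + a1 = csum d (m + 1) ∧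
  ∀ i, hIdx e d m 1 1 ≤ i → i ≤ m → e i = d (i + 1)


lemma csum_succ' (a : ℕ → ℤ) (t : ℕ) : csum a (t+1) = csum a t + a (t+1) := by
  unfold csum
  rw [Finset.sum_Icc_succ_top (by omega)]

lemma csum_add_Ioc' (a : ℕ → ℤ) {s t : ℕ} (h : s ≤ t) :
    csum a t = csum a s + ∑ i ∈ Finset.Ioc s t, a i := by
  unfold csum
  rw [show (1:ℕ) = 0+1 from rfl, Finset.Icc_add_one_left_eq_Ioc, Finset.Icc_add_one_left_eq_Ioc,
    Finset.sum_Ioc_consecutive _ (Nat.zero_le s) h]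

lemma csum_xSeq' (b c : ℕ → ℤ) (m n : ℕ) : ∀ j, csum (xSeq b c m n) j = Ssum b c m n j := by
  intro j
  induction j with
  | zero => simp [csum, Ssum]
  | succ k ih =>
      rw [csum_succ', ih, xSeq]
      simp only [Nat.add_sub_cancel]
      ring

lemma mem_hIdx_set' (b c : ℕ → ℤ) (m n : ℕ) (hn : 1 ≤ n) :
    (m + n) ∈ { i : ℕ | extSeq b m ((i : ℤ) - n + 1) < extSeq c (m + n) i } := by
  simp only [Set.mem_setOf_eq]
  have h1 : ((m + n : ℕ) : ℤ) - n + 1 = (m : ℤ) + 1 := by push_cast; ring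
  rw [h1]
  unfold extSeq
  rw [if_neg (by omega), if_neg (by omega), if_neg (by exact_mod_cast by omega),
    if_pos (by exact_mod_cast le_rfl)]
  exact bot_lt_iff_ne_bot.mpr (EReal.coe_ne_bot _)

lemma hIdx_le' (b c : ℕ → ℤ) (m n : ℕ) (hn : 1 ≤ n) : hIdx b c m n n ≤ m + n :=
  Nat.sInf_le (mem_hIdx_set' b c m n hn)

lemma le_hIdx' (b c : ℕ → ℤ) (m n : ℕ) (hn : 1 ≤ n) : n ≤ hIdx b c m n n := by
  apply le_csInf ⟨m + n, mem_hIdx_set' b c m n hn⟩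
  intro i hi
  by_contra hlt
  push_neg at hlt
  simp only [Set.mem_setOf_eq] at hi
  rw [extSeq, if_pos (by omega : (i:ℤ) - n + 1 ≤ 0)] at hi
  exact not_top_lt hi

lemma key_ge' (a b c : ℕ → ℤ) (m n : ℕ) (hn : 1 ≤ n)
    (h1 : ∀ i, 1 ≤ i → i ≤ m → c (i + n) ≤ b i)
    (h2 : csum b m + csum a n = csum c (m + n)) :
    csum a n ≤ Ssum b c m n n := by
  have hle : hIdx b c m n n ≤ m + n := hIdx_le' b c m n hn
  have hge : n ≤ hIdx b c m n n := le_hIdx' b c m n hn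
  set h := hIdx b c m n n with hh
  rw [Ssum, if_neg (by omega), ← hh]
  have e1 : csum c (m+n) = csum c h + ∑ i ∈ Finset.Ioc h (m+n), c i := csum_add_Ioc' c hle
  have e2 : csum b m = csum b (h - n) + ∑ i ∈ Finset.Ioc (h-n) m, b i :=
    csum_add_Ioc' b (by omega)
  have e3 : ∑ i ∈ Finset.Ioc h (m+n), c i = ∑ i ∈ Finset.Ioc (h-n) m, c (i + n) := by
    apply Finset.sum_nbij' (fun i => i - n) (fun i => i + n)
    · simp only [Finset.mem_Ioc]; intros; omega
    · simp only [Finset.mem_Ioc]; intros; omega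
    · simp only [Finset.mem_Ioc]; intros; omega
    · simp only [Finset.mem_Ioc]; intros; omega
    · intro i hi
      rw [Finset.mem_Ioc] at hi
      congr 1
      omega
  have e4 : ∑ i ∈ Finset.Ioc (h-n) m, c (i + n) ≤ ∑ i ∈ Finset.Ioc (h-n) m, b i := by
    apply Finset.sum_le_sum
    intro i hi
    rw [Finset.mem_Ioc] at hi
    exact h1 i (by omega) hi.2
  linarith

/-- the generalized majorization `c ≺ (b, a)` holds iff `x ≼ a`
in the dominance ordering. -/
theorem genMaj_iff_dominance (a b c : ℕ → ℤ) (m n : ℕ)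
    (ha : IsPartOn a n) (hb : IsPartOn b m) (hc : IsPartOn c (m + n))
    (h1 : ∀ i, 1 ≤ i → i ≤ m → c (i + n) ≤ b i)
    (h2 : csum b m + csum a n = csum c (m + n)) :
    GenMaj c b a m n ↔ DomOn (xSeq b c m n) a n := by
  constructor
  · rintro ⟨_, _, h3⟩
    constructor
    · intro j hj1 hjn
      rw [csum_xSeq', Ssum, if_neg (by omega)]
      exact h3 j hj1 hjn
    · rcases Nat.eq_zero_or_pos n with hn | hn
      · subst hn; simp [csum_xSeq', Ssum, csum]
      · have hk := key_ge' a b c m n hn h1 h2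
        have hq := h3 n hn le_rfl
        rw [csum_xSeq']
        rw [Ssum, if_neg (by omega)] at hk ⊢
        omega
  · rintro ⟨hd1, _⟩
    refine ⟨h1, h2, ?_⟩
    intro q hq1 hqn
    have := hd1 q hq1 hqn
    rwa [csum_xSeq', Ssum, if_neg (by omega)] at this
end

section
/- With the notation of generalized majorization, the indices h_q = min{ i : b_{i−q+1} < c_i } satisfy q ≤ h_q ≤ q + m for each q = 1,...,n, and h_1 < h_2 < ... < h_n. -/
lemma part_antitone (c : ℕ → ℤ) (N : ℕ) (hc : IsPartOn c N) :
    ∀ i j, 1 ≤ i → i ≤ j → j ≤ N → c j ≤ c i := by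
  intro i j hi hij hjN
  induction j with
  | zero => omega
  | succ k ih =>
    rcases Nat.lt_or_ge i (k+1) with h | h
    · have hk : c (k+1) ≤ c k := hc.2 k (by omega) (by omega)
      exact hk.trans (ih (by omega) (by omega))
    · have : i = k + 1 := by omega
      simp [this]

lemma extSeq_antitone (c : ℕ → ℤ) (N : ℕ) (hc : IsPartOn c N) :
    ∀ i j : ℤ, i ≤ j → extSeq c N j ≤ extSeq c N i := by
  intro i j hij
  unfold extSeq
  by_cases hj0 : j ≤ 0
  · have : i ≤ 0 := le_trans hij hj0
    simp [hj0, this]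
  · simp only [hj0, if_false]
    by_cases hi0 : i ≤ 0
    · simp only [hi0, if_true]
      split <;> simp
    · simp only [hi0, if_false]
      by_cases hjN : j ≤ (N : ℤ)
      · have hiN : i ≤ (N : ℤ) := le_trans hij hjN
        simp only [hjN, hiN, if_true]
        have h1 : (1:ℤ) ≤ i := by omega
        have := part_antitone c N hc i.toNat j.toNat (by omega) (by omega) (by omega)
        exact_mod_cast this
      · simp [hjN]

lemma mem_hSet_ge (b c : ℕ → ℤ) (m n q : ℕ) (i : ℕ)
    (h : extSeq b m ((i : ℤ) - q + 1) < extSeq c (m + n) i) : q ≤ i := by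
  by_contra hlt
  have h0 : (i : ℤ) - q + 1 ≤ 0 := by omega
  have : extSeq b m ((i : ℤ) - q + 1) = ⊤ := by simp [extSeq, h0]
  rw [this] at h
  exact not_top_lt h

lemma hSet_top_mem (b c : ℕ → ℤ) (m n q : ℕ) (hq : 1 ≤ q) (hqn : q ≤ n) :
    extSeq b m (((q + m : ℕ) : ℤ) - q + 1) < extSeq c (m + n) ((q + m : ℕ)) := by
  have hL : extSeq b m (((q + m : ℕ) : ℤ) - q + 1) = ⊥ := by
    have h1 : ¬ (((q + m : ℕ) : ℤ) - q + 1 ≤ 0) := by push_cast; omega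
    have h2 : ¬ (((q + m : ℕ) : ℤ) - q + 1 ≤ (m : ℤ)) := by push_cast; omega
    simp [extSeq, h1, h2]
  have hR : extSeq c (m + n) ((q + m : ℕ)) = (((c (q+m) : ℤ) : ℝ) : EReal) := by
    unfold extSeq
    rw [if_neg (by omega : ¬ (((q + m : ℕ) : ℤ) ≤ 0)),
      if_pos (by exact_mod_cast (by omega : q + m ≤ m + n))]
    norm_num
    congr 1
  rw [hL, hR]
  exact EReal.bot_lt_coe _

lemma hSet_nonempty (b c : ℕ → ℤ) (m n q : ℕ) (hq : 1 ≤ q) (hqn : q ≤ n) :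
    { i : ℕ | extSeq b m ((i : ℤ) - q + 1) < extSeq c (m + n) i }.Nonempty :=
  ⟨q + m, hSet_top_mem b c m n q hq hqn⟩

lemma hIdx_mem (b c : ℕ → ℤ) (m n q : ℕ) (hq : 1 ≤ q) (hqn : q ≤ n) :
    extSeq b m (((hIdx b c m n q : ℕ) : ℤ) - q + 1) < extSeq c (m + n) (hIdx b c m n q) :=
  Nat.sInf_mem (hSet_nonempty b c m n q hq hqn)

/-- `q ≤ h_q ≤ q + m` for `q = 1, ..., n`, and `h_1 < h_2 < ... < h_n`. -/
theorem hIdx_bounds_and_strictMono (b c : ℕ → ℤ) (m n : ℕ)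
    (hb : IsPartOn b m) (hc : IsPartOn c (m + n))
    (h1 : ∀ i, 1 ≤ i → i ≤ m → c (i + n) ≤ b i) :
    (∀ q, 1 ≤ q → q ≤ n → q ≤ hIdx b c m n q ∧ hIdx b c m n q ≤ q + m) ∧
    (∀ q, 1 ≤ q → q + 1 ≤ n → hIdx b c m n q < hIdx b c m n (q + 1)) := by
  constructor
  · intro q hq hqn
    refine ⟨mem_hSet_ge b c m n q _ (hIdx_mem b c m n q hq hqn), ?_⟩
    exact Nat.sInf_le (hSet_top_mem b c m n q hq hqn)
  · intro q hq hqn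
    set i := hIdx b c m n (q + 1) with hi
    have hmem := hIdx_mem b c m n (q + 1) (by omega) hqn
    have hge : q + 1 ≤ i := mem_hSet_ge b c m n (q+1) i hmem
    have hmem' : extSeq b m (((i - 1 : ℕ) : ℤ) - q + 1) < extSeq c (m + n) ((i - 1 : ℕ)) := by
      have heq : ((i - 1 : ℕ) : ℤ) - q + 1 = (i : ℤ) - (q + 1) + 1 := by
        push_cast [Nat.cast_sub (by omega : 1 ≤ i)]; ring
      rw [heq]
      refine lt_of_lt_of_le ?_ (extSeq_antitone c (m+n) hc ((i-1:ℕ)) i (by push_cast; omega))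
      exact_mod_cast hmem
    have hle : hIdx b c m n q ≤ i - 1 := Nat.sInf_le hmem'
    omega
end
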